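/- No exponential concentration of first return times in terms of the expected recurrence time: There do not exist constants a > 0 and b > 0 such that for every Markov chain on a finite state space, every state s with finite expected recurrence time ρ_s, and every t > 0, P_s[ H_s^+ ≥ t ] ≤ a·e^{−t/(b·ρ_s)}. In particular, for each k ≥ 3, the Markov chain M_k on states {s_1, …, s_k} in which s_1 transitions to itself with probability 1 − 1/(k−1) and to s_2 with probability 1/(k−1), and s_j transitions deterministically to s_{j+1} for 2 ≤ j ≤ k−1 with s_k transitioning deterministically to s_1, satisfies ρ_{s_1} = 2 and P_{s_1}[ H_{s_1}^+ = k ] = 1/(k−1), which violates any such bound for k large enough. -/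

import Mathlib

open MeasureTheory ProbabilityTheory Filter
open scoped ENNReal ENat

noncomputable section

/-- The first return time to `s` of the process `X` (`⊤` if `s` is never revisited). -/
def retTime {S Ω : Type*} (X : ℕ → Ω → S) (s : S) (ω : Ω) : ℕ∞ :=
  ⨅ (m : ℕ) (_ : 0 < m ∧ X m ω = s), (m : ℕ∞)

/-- The transition kernel of the Markov chain `M_k` on states `{0, …, k-1}`:
state `0` loops with probability `1 - 1/(k-1)` and moves to state `1` with
probability `1/(k-1)`; states `1, …, k-2` move deterministically to the next state,
and state `k-1` moves deterministically back to `0`. -/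
def mkKernel (k : ℕ) : Fin k → Fin k → ℝ≥0∞ := fun i j =>
  if (i : ℕ) = 0 then
    (if (j : ℕ) = 0 then 1 - 1 / ((k : ℝ≥0∞) - 1)
     else if (j : ℕ) = 1 then 1 / ((k : ℝ≥0∞) - 1) else 0)
  else if (i : ℕ) + 1 = k then (if (j : ℕ) = 0 then 1 else 0)
  else (if (j : ℕ) = (i : ℕ) + 1 then 1 else 0)

namespace Stmt17
open Set



def GG (m : ℕ) : Type := ℕ → Fin (m+2)

instance (m : ℕ) : AddCommGroup (GG m) := inferInstanceAs (AddCommGroup (ℕ → Fin (m+2)))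
instance (m : ℕ) : TopologicalSpace (GG m) := inferInstanceAs (TopologicalSpace (ℕ → Fin (m+2)))
instance (m : ℕ) : IsTopologicalAddGroup (Fin (m+2)) := ⟨⟩
instance (m : ℕ) : IsTopologicalAddGroup (GG m) :=
  inferInstanceAs (IsTopologicalAddGroup (ℕ → Fin (m+2)))
instance (m : ℕ) : CompactSpace (GG m) := inferInstanceAs (CompactSpace (ℕ → Fin (m+2)))
instance (m : ℕ) : T2Space (GG m) := inferInstanceAs (T2Space (ℕ → Fin (m+2)))
instance (m : ℕ) : SecondCountableTopology (GG m) :=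
  inferInstanceAs (SecondCountableTopology (ℕ → Fin (m+2)))
instance (m : ℕ) : Nonempty (GG m) := inferInstanceAs (Nonempty (ℕ → Fin (m+2)))
instance (m : ℕ) : MeasurableSpace (GG m) := borel _
instance (m : ℕ) : BorelSpace (GG m) := ⟨rfl⟩
instance (m : ℕ) : MeasurableAdd (GG m) :=
  ⟨fun _ => (continuous_const.add continuous_id).measurable,
   fun _ => (continuous_id.add continuous_const).measurable⟩

noncomputable def haarG (m : ℕ) : Measure (GG m) :=
  Measure.addHaarMeasure (⊤ : TopologicalSpace.PositiveCompacts (GG m))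

instance (m : ℕ) : IsProbabilityMeasure (haarG m) :=
  ⟨by rw [haarG, ← TopologicalSpace.PositiveCompacts.coe_top]
      exact Measure.addHaarMeasure_self⟩

instance (m : ℕ) : (haarG m).IsAddLeftInvariant := by unfold haarG; infer_instance

lemma GG.add_apply {m : ℕ} (ω g : GG m) (t : ℕ) : (ω + g) t = ω t + g t := rfl
lemma GG.neg_apply {m : ℕ} (g : GG m) (t : ℕ) : (-g) t = -(g t) := rfl

lemma evalG_continuous (m t : ℕ) : Continuous (fun ω : GG m => ω t) :=
  continuous_apply (A := fun _ : ℕ => Fin (m+2)) t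

lemma cylPt_open (m M : ℕ) (c : Fin M → Fin (m+2)) :
    IsOpen {ω : GG m | ∀ i : Fin M, ω i.val = c i} := by
  have : {ω : GG m | ∀ i : Fin M, ω i.val = c i}
      = ⋂ i : Fin M, (fun ω : GG m => ω i.val) ⁻¹' {c i} := by
    ext ω; simp [Set.mem_iInter]
  rw [this]
  exact isOpen_iInter_of_finite fun i =>
    (evalG_continuous m i.val).isOpen_preimage _ (isOpen_discrete _)

lemma haar_cylPt (m M : ℕ) (c : Fin M → Fin (m+2)) :
    haarG m {ω : GG m | ∀ i : Fin M, ω i.val = c i} = ((m+2 : ℝ≥0∞))⁻¹ ^ M := by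
  set A : (Fin M → Fin (m+2)) → Set (GG m) := fun c => {ω | ∀ i : Fin M, ω i.val = c i} with hA
  have hmeas : ∀ c', MeasurableSet (A c') := fun c' => (cylPt_open m M c').measurableSet
  have key : ∀ c', haarG m (A c') = haarG m (A 0) := by
    intro c'
    set g : GG m := (fun j => if h : j < M then c' ⟨j, h⟩ else 0) with hg
    have hset : (fun ω : GG m => (-g) + ω) ⁻¹' (A 0) = A c' := by
      ext ω
      simp only [A, Set.mem_preimage, Set.mem_setOf_eq]
      constructor
      · intro h i
        have h2 := h i
        rw [GG.add_apply, GG.neg_apply] at h2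
        have h3 : (0 : Fin M → Fin (m+2)) i = 0 := rfl
        rw [h3, neg_add_eq_zero] at h2
        rw [← h2, hg]; simp [i.isLt]
      · intro h i
        rw [GG.add_apply, GG.neg_apply]
        show _ = (0 : Fin M → Fin (m+2)) i
        have h3 : (0 : Fin M → Fin (m+2)) i = 0 := rfl
        rw [h3, neg_add_eq_zero, h i, hg]
        simp [i.isLt]
    rw [← hset, measure_preimage_add]
  have hcover : (⋃ c', A c') = Set.univ := by
    ext ω
    simp only [Set.mem_iUnion, Set.mem_univ, iff_true]
    exact ⟨fun i => ω i.val, fun i => rfl⟩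
  have hdisj : Pairwise (Function.onFun Disjoint A) := by
    intro c1 c2 hne
    rw [Function.onFun, Set.disjoint_left]
    intro ω h1 h2
    exact hne (funext fun i => by rw [← h1 i, ← h2 i])
  have hsum := measure_iUnion (μ := haarG m) hdisj hmeas
  rw [hcover, measure_univ, tsum_fintype] at hsum
  have hconst : ∀ c' ∈ Finset.univ, haarG m (A c') = haarG m (A 0) := fun c' _ => key c'
  rw [Finset.sum_congr rfl hconst, Finset.sum_const, Finset.card_univ, Fintype.card_fun,
    Fintype.card_fin, Fintype.card_fin] at hsum
  have hN : ((m+2)^M : ℕ) ≠ 0 := by positivity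
  have hx : haarG m (A 0) = (((m+2)^M : ℕ) : ℝ≥0∞)⁻¹ := by
    have h1 : (((m+2)^M : ℕ) : ℝ≥0∞) * haarG m (A 0) = 1 := by
      rw [← nsmul_eq_mul]; exact hsum.symm
    rw [← one_mul (haarG m (A 0)), ← ENNReal.inv_mul_cancel (by exact_mod_cast hN)
      (ENNReal.natCast_ne_top _), mul_assoc, h1, mul_one]
  rw [key c, hx]
  rw [Nat.cast_pow, ← ENNReal.inv_pow]
  norm_num

lemma haar_cylSet (m M : ℕ) (Ds : Fin M → Finset (Fin (m+2))) :
    haarG m {ω : GG m | ∀ i : Fin M, ω i.val ∈ Ds i}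
      = ∏ i : Fin M, ((Ds i).card : ℝ≥0∞) / (m+2 : ℝ≥0∞) := by
  have hset : {ω : GG m | ∀ i : Fin M, ω i.val ∈ Ds i}
      = ⋃ c ∈ Fintype.piFinset Ds, {ω : GG m | ∀ i : Fin M, ω i.val = c i} := by
    ext ω
    simp only [Set.mem_setOf_eq, Set.mem_iUnion, Fintype.mem_piFinset]
    constructor
    · intro h
      exact ⟨fun i => ω i.val, fun i => h i, fun i => rfl⟩
    · rintro ⟨c, hc, hω⟩ i
      rw [hω i]; exact hc i
  rw [hset, measure_biUnion_finset ?disj (fun c _ => (cylPt_open m M c).measurableSet)]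
  case disj =>
    intro c1 _ c2 _ hne
    simp only [Function.onFun]
    rw [Set.disjoint_left]
    intro ω h1 h2
    exact hne (funext fun i => by rw [← h1 i, ← h2 i])
  have : ∀ c ∈ Fintype.piFinset Ds,
      haarG m {ω : GG m | ∀ i : Fin M, ω i.val = c i} = ((m+2 : ℝ≥0∞))⁻¹ ^ M :=
    fun c _ => haar_cylPt m M c
  rw [Finset.sum_congr rfl this, Finset.sum_const, Fintype.card_piFinset, nsmul_eq_mul,
    Nat.cast_prod]
  simp only [div_eq_mul_inv]
  rw [Finset.prod_mul_distrib, Finset.prod_const, Finset.card_univ, Fintype.card_fin]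




def stepF (m : ℕ) (i : Fin (m+3)) (d : Fin (m+2)) : Fin (m+3) :=
  if (i:ℕ) = 0 then (if (d:ℕ) = 0 then 1 else 0) else i + 1

def XF (m : ℕ) : ℕ → GG m → Fin (m+3)
  | 0, _ => 0
  | (t+1), ω => stepF m (XF m t ω) (ω t)

def DF (m : ℕ) (i j : Fin (m+3)) : Finset (Fin (m+2)) :=
  Finset.univ.filter (fun d => stepF m i d = j)

lemma hden (m : ℕ) : ((m+3:ℕ):ℝ≥0∞) - 1 = (m:ℝ≥0∞)+2 := by
  rw [show ((1:ℝ≥0∞)) = ((1:ℕ):ℝ≥0∞) by norm_num, ← ENNReal.natCast_sub]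
  push_cast
  norm_num

lemma hden' (m : ℕ) : (m:ℝ≥0∞)+3-1 = (m:ℝ≥0∞)+2 := by
  rw [show (m:ℝ≥0∞)+3 = ((m:ℝ≥0∞)+2)+1 by ring, ENNReal.add_sub_cancel_right ENNReal.one_ne_top]

lemma hMne : ∀ m : ℕ, ((m:ℝ≥0∞)+2) ≠ 0 := fun m => by simp [add_eq_zero]

lemma hMtop : ∀ m : ℕ, ((m:ℝ≥0∞)+2) ≠ ⊤ := fun m =>
  ENNReal.add_ne_top.2 ⟨ENNReal.natCast_ne_top m, by norm_num⟩

lemma frac_compl (m : ℕ) : ((m:ℝ≥0∞)+1)/((m:ℝ≥0∞)+2) = 1 - 1/((m:ℝ≥0∞)+2) := by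
  have h : ((m:ℝ≥0∞)+1)/((m:ℝ≥0∞)+2) + 1/((m:ℝ≥0∞)+2) = 1 := by
    rw [ENNReal.div_add_div_same]
    rw [show (m:ℝ≥0∞)+1+1 = (m:ℝ≥0∞)+2 by ring]
    exact ENNReal.div_self (hMne m) (hMtop m)
  have hne : (1:ℝ≥0∞)/((m:ℝ≥0∞)+2) ≠ ⊤ := by
    simp [ENNReal.div_eq_top, hMne m]
  exact ENNReal.eq_sub_of_add_eq hne h

lemma DF_kernel (m : ℕ) (i j : Fin (m+3)) :
    ((DF m i j).card : ℝ≥0∞) / ((m:ℝ≥0∞)+2) = mkKernel (m+3) i j := by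
  unfold DF
  by_cases hi : (i:ℕ) = 0
  · by_cases hj : (j:ℕ) = 0
    · have hjj : j = 0 := Fin.ext (by simpa using hj)
      have hcond : ∀ d : Fin (m+2), (stepF m i d = j) ↔ ¬ (d = (0 : Fin (m+2))) := by
        intro d
        by_cases hd : (d:ℕ) = 0 <;>
          simp [stepF, hi, hd, hjj, Fin.ext_iff]
      rw [Finset.filter_congr (fun d _ => hcond d), Finset.filter_ne',
        Finset.card_erase_of_mem (Finset.mem_univ _), Finset.card_univ, Fintype.card_fin]
      simp only [mkKernel, hi, hj, if_pos rfl, hden m]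
      push_cast
      exact frac_compl m
    · by_cases hj1 : (j:ℕ) = 1
      · have hjj : j = 1 := Fin.ext (by simp [hj1, Fin.val_one])
        have hcond : ∀ d : Fin (m+2), (stepF m i d = j) ↔ d = (0 : Fin (m+2)) := by
          intro d
          by_cases hd : (d:ℕ) = 0 <;>
            simp [stepF, hi, hd, hjj, Fin.ext_iff]
        rw [Finset.filter_congr (fun d _ => hcond d), Finset.filter_eq',
          if_pos (Finset.mem_univ _), Finset.card_singleton]
        simp [mkKernel, hi, hj, hj1, hden m, hden' m]
      · have hcond : ∀ d : Fin (m+2), ¬ (stepF m i d = j) := by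
          intro d
          by_cases hd : (d:ℕ) = 0 <;>
            simp [stepF, hi, hd, Fin.ext_iff] <;> omega
        rw [Finset.filter_false_of_mem (fun d _ => hcond d)]
        simp [mkKernel, hi, hj, hj1]
  · have hstep : ∀ d : Fin (m+2), stepF m i d = i + 1 := by
      intro d; simp [stepF, hi]
    by_cases hj : i + 1 = j
    · have : ∀ d : Fin (m+2), stepF m i d = j := fun d => (hstep d).trans hj
      rw [Finset.filter_true_of_mem (fun d _ => this d), Finset.card_univ, Fintype.card_fin]
      rw [show (((m+2:ℕ)):ℝ≥0∞) = (m:ℝ≥0∞)+2 by push_cast; ring,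
        ENNReal.div_self (hMne m) (hMtop m)]
      have hv := Fin.val_add_one i
      by_cases hik : (i:ℕ) + 1 = m + 3
      · have hlast : i = Fin.last (m+2) := Fin.ext (by simp [Fin.last]; omega)
        have : (j:ℕ) = 0 := by rw [← hj, hv, if_pos hlast]
        simp [mkKernel, hi, hik, this]
      · have hlast : ¬ i = Fin.last (m+2) := by
          intro hcon; rw [hcon] at hik; simp [Fin.last] at hik
        have : (j:ℕ) = (i:ℕ) + 1 := by rw [← hj, hv, if_neg hlast]
        simp [mkKernel, hi, hik, this]; omega
    · have hcond : ∀ d : Fin (m+2), ¬ (stepF m i d = j) := fun d => by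
        rw [hstep d]; exact hj
      rw [Finset.filter_false_of_mem (fun d _ => hcond d)]
      have hv := Fin.val_add_one i
      by_cases hik : (i:ℕ) + 1 = m + 3
      · have hlast : i = Fin.last (m+2) := Fin.ext (by simp [Fin.last]; omega)
        have hj0 : ¬ (j:ℕ) = 0 := by
          intro hcon
          exact hj (Fin.ext (by rw [hv, if_pos hlast, hcon]))
        simp [mkKernel, hi, hik, hj0]
      · have hlast : ¬ i = Fin.last (m+2) := by
          intro hcon; rw [hcon] at hik; simp [Fin.last] at hik
        have hj0 : ¬ (j:ℕ) = (i:ℕ)+1 := by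
          intro hcon
          exact hj (Fin.ext (by rw [hv, if_neg hlast, hcon]))
        simp [mkKernel, hi, hik, hj0]
        exact fun h => absurd h (by omega)


lemma XF_open (m t : ℕ) : ∀ j : Fin (m+3), IsOpen (XF m t ⁻¹' {j}) := by
  induction t with
  | zero =>
    intro j
    by_cases h : (0 : Fin (m+3)) = j
    · have : XF m 0 ⁻¹' {j} = Set.univ := by
        ext ω; simp [XF, h.symm]
      rw [this]; exact isOpen_univ
    · have : XF m 0 ⁻¹' {j} = ∅ := by
        ext ω; simp [XF]; exact fun hc => h hc
      rw [this]; exact isOpen_empty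
  | succ t ih =>
    intro j
    have hrep : XF m (t+1) ⁻¹' {j}
        = ⋃ i : Fin (m+3), ((XF m t ⁻¹' {i}) ∩ ((fun ω : GG m => ω t) ⁻¹' {d | stepF m i d = j})) := by
      ext ω
      simp only [Set.mem_preimage, Set.mem_singleton_iff, Set.mem_iUnion, Set.mem_inter_iff,
        Set.mem_setOf_eq]
      constructor
      · intro h; exact ⟨XF m t ω, rfl, h⟩
      · rintro ⟨i, h1, h2⟩; rw [show XF m (t+1) ω = stepF m (XF m t ω) (ω t) from rfl, h1]; exact h2
    rw [hrep]
    exact isOpen_iUnion fun i => (ih i).inter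
      ((evalG_continuous m t).isOpen_preimage _ (isOpen_discrete _))

lemma XF_measurable (m t : ℕ) : Measurable (XF m t) :=
  measurable_to_countable' fun j => (XF_open m t j).measurableSet

lemma traj_eq (m t : ℕ) (g : Fin (t+1) → Fin (m+3)) (hg : g 0 = 0) :
    {ω : GG m | ∀ i : Fin (t+1), XF m i.val ω = g i}
      = {ω : GG m | ∀ i : Fin t, ω i.val ∈ DF m (g i.castSucc) (g i.succ)} := by
  ext ω
  simp only [Set.mem_setOf_eq, DF, Finset.mem_filter, Finset.mem_univ, true_and]
  constructor
  · intro h i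
    have h1 := h i.castSucc
    have h2 := h i.succ
    rw [show (i.succ : Fin (t+1)).val = i.val + 1 from rfl] at h2
    rw [show (i.castSucc : Fin (t+1)).val = i.val from rfl] at h1
    rw [← h2, ← h1]
    rfl
  · intro h
    have key : ∀ j, (hj : j ≤ t) → XF m j ω = g ⟨j, by omega⟩ := by
      intro j
      induction j with
      | zero =>
        intro _
        have : (⟨0, by omega⟩ : Fin (t+1)) = 0 := rfl
        rw [this, hg]; rfl
      | succ j ih =>
        intro hj
        have h1 := ih (by omega)
        have h2 := h ⟨j, by omega⟩
        have e2 : XF m (j+1) ω = stepF m (XF m j ω) (ω j) := rfl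
        rw [e2, h1]
        exact h2
    intro i
    have := key i.val (by omega)
    rw [this]

lemma traj_measure (m t : ℕ) (g : Fin (t+1) → Fin (m+3)) (hg : g 0 = 0) :
    haarG m {ω : GG m | ∀ i : Fin (t+1), XF m i.val ω = g i}
      = ∏ i : Fin t, mkKernel (m+3) (g i.castSucc) (g i.succ) := by
  rw [traj_eq m t g hg, haar_cylSet]
  exact Finset.prod_congr rfl fun i _ => DF_kernel m _ _

lemma traj_measure_zero (m t : ℕ) (g : Fin (t+1) → Fin (m+3)) (hg : ¬ g 0 = 0) :
    haarG m {ω : GG m | ∀ i : Fin (t+1), XF m i.val ω = g i} = 0 := by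
  have : {ω : GG m | ∀ i : Fin (t+1), XF m i.val ω = g i} = ∅ := by
    ext ω
    simp only [Set.mem_setOf_eq, Set.mem_empty_iff_false, iff_false, not_forall]
    refine ⟨0, fun hc => hg ?_⟩
    rw [← hc]; rfl
  rw [this, measure_empty]

lemma markovF (m t : ℕ) (h : Fin (t+1) → Fin (m+3)) (s' : Fin (m+3)) :
    haarG m {ω | XF m (t+1) ω = s' ∧ ∀ i : Fin (t+1), XF m i.val ω = h i}
      = mkKernel (m+3) (h (Fin.last t)) s'
          * haarG m {ω | ∀ i : Fin (t+1), XF m i.val ω = h i} := by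
  have hset : {ω : GG m | XF m (t+1) ω = s' ∧ ∀ i : Fin (t+1), XF m i.val ω = h i}
      = {ω : GG m | ∀ i : Fin (t+2), XF m i.val ω = (Fin.snoc h s' : Fin (t+2) → Fin (m+3)) i} := by
    ext ω
    simp only [Set.mem_setOf_eq]
    constructor
    · rintro ⟨h1, h2⟩ i
      induction i using Fin.lastCases with
      | last =>
        rw [Fin.snoc_last]
        exact h1
      | cast j =>
        rw [Fin.snoc_castSucc]
        exact h2 j
    · intro hh
      refine ⟨?_, fun i => ?_⟩
      · have := hh (Fin.last (t+1))
        rwa [Fin.snoc_last] at this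
      · have := hh i.castSucc
        rwa [Fin.snoc_castSucc] at this
  by_cases h0 : h 0 = 0
  · have hg0 : (Fin.snoc h s' : Fin (t+2) → Fin (m+3)) 0 = 0 := by
      rw [show (0 : Fin (t+2)) = Fin.castSucc 0 from rfl, Fin.snoc_castSucc, h0]
    rw [hset, traj_measure m (t+1) _ hg0, traj_measure m t h h0, Fin.prod_univ_castSucc]
    simp only [Fin.succ_castSucc, Fin.snoc_castSucc, Fin.succ_last, Fin.snoc_last]
    exact mul_comm _ _
  · rw [hset, traj_measure_zero m (t+1) _ ?h1, traj_measure_zero m t h h0, mul_zero]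
    case h1 =>
      rw [show (0 : Fin (t+2)) = Fin.castSucc 0 from rfl, Fin.snoc_castSucc]
      exact h0

lemma mk_row (m : ℕ) (i : Fin (m+3)) : ∑ j, mkKernel (m+3) i j = 1 := by
  have h1 : ∀ j ∈ Finset.univ, mkKernel (m+3) i j
      = ((DF m i j).card : ℝ≥0∞) * ((m:ℝ≥0∞)+2)⁻¹ := fun j _ => by
    rw [← DF_kernel m i j, div_eq_mul_inv]
  rw [Finset.sum_congr rfl h1, ← Finset.sum_mul]
  have hcard : ∑ j : Fin (m+3), ((DF m i j).card : ℝ≥0∞) = ((m:ℝ≥0∞)+2) := by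
    rw [← Nat.cast_sum]
    have h2 := Finset.card_eq_sum_card_fiberwise
      (f := fun d => stepF m i d) (s := Finset.univ) (t := Finset.univ)
      (fun d _ => Finset.mem_univ _)
    rw [show ∑ j : Fin (m+3), (DF m i j).card
        = ∑ j : Fin (m+3), (Finset.univ.filter fun d => stepF m i d = j).card from rfl, ← h2,
      Finset.card_univ, Fintype.card_fin]
    push_cast
    ring
  rw [hcard, ENNReal.mul_inv_cancel (hMne m) (hMtop m)]

lemma X0_univ (m : ℕ) : {ω : GG m | XF m 0 ω = (⟨0, by omega⟩ : Fin (m+3))} = Set.univ := by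
  ext ω
  simp only [Set.mem_setOf_eq, Set.mem_univ, iff_true]
  exact Fin.ext rfl

lemma X0_ne_zero (m : ℕ) :
    haarG m {ω : GG m | XF m 0 ω = (⟨0, by omega⟩ : Fin (m+3))} ≠ 0 := by
  rw [X0_univ m, measure_univ]
  exact one_ne_zero



lemma retTime_eq_of {S Ω : Type*} (X : ℕ → Ω → S) (s : S) (ω : Ω) (mm : ℕ)
    (hm : 0 < mm) (h : X mm ω = s) (hlt : ∀ j, 0 < j → j < mm → X j ω ≠ s) :
    retTime X s ω = (mm : ℕ∞) := by
  refine le_antisymm ?_ ?_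
  · exact iInf_le_of_le mm (iInf_le_of_le ⟨hm, h⟩ le_rfl)
  · refine le_iInf fun j => le_iInf fun hj => ?_
    by_contra hcon
    push_neg at hcon
    have hjlt : j < mm := by exact_mod_cast hcon
    exact hlt j hj.1 hjlt hj.2

theorem part2 (k : ℕ) (hk : 3 ≤ k)
    (Ω : Type) [MeasurableSpace Ω] (μ : Measure Ω) [IsProbabilityMeasure μ]
    (X : ℕ → Ω → Fin k)
    (hXm : ∀ t, Measurable (X t))
    (hM : ∀ (t : ℕ) (h : Fin (t + 1) → Fin k) (s' : Fin k),
      μ {ω | X (t + 1) ω = s' ∧ ∀ i : Fin (t + 1), X i.val ω = h i}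
        = mkKernel k (h (Fin.last t)) s' * μ {ω | ∀ i : Fin (t + 1), X i.val ω = h i})
    (h0 : μ {ω | X 0 ω = (⟨0, Nat.lt_of_lt_of_le (by norm_num) hk⟩ : Fin k)} ≠ 0) :
    (∫⁻ ω, (retTime X (⟨0, Nat.lt_of_lt_of_le (by norm_num) hk⟩ : Fin k) ω : ℝ≥0∞)
        ∂(ProbabilityTheory.cond μ {ω | X 0 ω = (⟨0, Nat.lt_of_lt_of_le (by norm_num) hk⟩ : Fin k)}) = 2)
    ∧ (ProbabilityTheory.cond μ {ω | X 0 ω = (⟨0, Nat.lt_of_lt_of_le (by norm_num) hk⟩ : Fin k)})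
          {ω | retTime X (⟨0, Nat.lt_of_lt_of_le (by norm_num) hk⟩ : Fin k) ω = (k : ℕ∞)}
        = 1 / ((k : ℝ≥0∞) - 1) := by
  have hk0 : 0 < k := by omega
  set s0 : Fin k := ⟨0, hk0⟩ with hs0
  set p : ℝ≥0∞ := 1 / ((k : ℝ≥0∞) - 1) with hp
  set c : ℕ → Fin k := fun i => ⟨i % k, Nat.mod_lt _ hk0⟩ with hc
  set s : Set Ω := {ω | X 0 ω = s0} with hsdef
  have hsmeas : MeasurableSet s := hXm 0 (measurableSet_singleton s0)
  -- casts
  have hnn : ((k : ℝ≥0∞) - 1) = ((k-1 : ℕ) : ℝ≥0∞) := by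
    rw [ENNReal.natCast_sub, Nat.cast_one]
  have hnne : ((k-1:ℕ) : ℝ≥0∞) ≠ 0 := by
    simp only [ne_eq, Nat.cast_eq_zero]; omega
  have hnnetop : ((k-1:ℕ) : ℝ≥0∞) ≠ ⊤ := ENNReal.natCast_ne_top _
  have hpinv : p = ((k-1:ℕ) : ℝ≥0∞)⁻¹ := by rw [hp, hnn, one_div]
  have hple : p ≤ 1 := by
    rw [hpinv]
    exact ENNReal.inv_le_one.2 (by exact_mod_cast (by omega : 1 ≤ k - 1))
  have hptop : p ≠ ⊤ := by
    rw [hpinv]; exact ENNReal.inv_ne_top.2 hnne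
  -- c values
  have hcval : ∀ i, i < k → (c i : ℕ) = i := fun i hi => Nat.mod_eq_of_lt hi
  have hc0 : c 0 = s0 := Fin.ext (by simp [hcval 0 hk0, hs0])
  have hck : c k = s0 := Fin.ext (by simp [hc, Nat.mod_self, hs0])
  -- events
  set E : ℕ → Set Ω := fun t => {ω | ∀ i : Fin (t+1), X i.val ω = c i.val} with hE
  have hEmeas : ∀ t, MeasurableSet (E t) := by
    intro t
    have : E t = ⋂ i : Fin (t+1), (X i.val) ⁻¹' {c i.val} := by
      ext ω; simp [hE, Set.mem_iInter]
    rw [this]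
    exact MeasurableSet.iInter fun i => hXm i.val (measurableSet_singleton _)
  have hE0 : E 0 = s := by
    ext ω
    simp only [hE, Set.mem_setOf_eq, hsdef]
    constructor
    · intro h; simpa [hc0] using h 0
    · intro h i
      have : i.val = 0 := by omega
      rw [this, hc0]; exact h
  set B : Set Ω := {ω | X 1 ω = s0 ∧ ∀ i : Fin 1, X i.val ω = s0} with hB
  have hBs : B ⊆ s := fun ω h => by
    have := h.2 0; exact this
  have hBmeas : MeasurableSet B := by
    have hBalt : B = (X 1) ⁻¹' {s0} ∩ {ω | ∀ i : Fin 1, X i.val ω = s0} := by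
      ext ω; exact ⟨fun h => ⟨h.1, h.2⟩, fun h => ⟨h.1, h.2⟩⟩
    have h2 : {ω | ∀ i : Fin 1, X i.val ω = s0} = (X 0) ⁻¹' {s0} := by
      ext ω
      constructor
      · intro h; exact h 0
      · intro h i
        have hi : (i : ℕ) = 0 := by omega
        rw [hi]; exact h
    rw [hBalt, h2]
    exact (hXm 1 (measurableSet_singleton s0)).inter (hXm 0 (measurableSet_singleton s0))
  have hmk00 : mkKernel k s0 s0 = 1 - p := by
    simp [mkKernel, hs0, hp]
  have hμB : μ B = (1 - p) * μ s := by
    have hmm := hM 0 (fun _ => s0) s0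
    have e2 : {ω | ∀ i : Fin (0+1), X i.val ω = (fun _ : Fin 1 => s0) i} = s := by
      ext ω
      constructor
      · intro h; exact h 0
      · intro h i
        show X i.val ω = s0
        rw [show (i : ℕ) = 0 from by omega]; exact h
    rw [e2] at hmm
    rw [hmk00] at hmm
    exact hmm
  -- one-step along the cycle
  have hEsucc : ∀ t : ℕ, μ (E (t+1)) = mkKernel k (c t) (c (t+1)) * μ (E t) := by
    intro t
    have hmm := hM t (fun i : Fin (t+1) => c i.val) (c (t+1))
    have e1 : {ω | X (t+1) ω = c (t+1) ∧ ∀ i : Fin (t+1), X i.val ω = c i.val}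
        = E (t+1) := by
      ext ω
      simp only [Set.mem_setOf_eq, hE]
      constructor
      · rintro ⟨h1, h2⟩ i
        by_cases hi : (i : ℕ) = t+1
        · rw [hi]; exact h1
        · exact h2 ⟨i.val, by omega⟩
      · intro h
        exact ⟨h ⟨t+1, by omega⟩, fun i => h ⟨i.val, by omega⟩⟩
    have e2 : {ω | ∀ i : Fin (t+1), X i.val ω = c i.val} = E t := rfl
    rw [e1, e2] at hmm
    rw [hmm]
    rfl
  have hkc : ∀ t : ℕ, 1 ≤ t → t+1 ≤ k → mkKernel k (c t) (c (t+1)) = 1 := by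
    intro t h1 h2
    have hmt : t % k = t := Nat.mod_eq_of_lt (by omega)
    have ht0 : ¬ (t = 0) := by omega
    by_cases htk : t+1 = k
    · have hmt1 : (t+1) % k = 0 := by rw [htk]; exact Nat.mod_self k
      simp [mkKernel, hc, hmt, hmt1, ht0, htk]
    · have hmt1 : (t+1) % k = t+1 := Nat.mod_eq_of_lt (by omega)
      simp [mkKernel, hc, hmt, hmt1, ht0, htk]
  have hkc0 : mkKernel k (c 0) (c 1) = p := by
    have h1 : 1 % k = 1 := Nat.mod_eq_of_lt (by omega)
    have h0' : 0 % k = 0 := Nat.zero_mod k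
    have hk1 : ¬ (k = 1) := by omega
    simp [mkKernel, hc, h0', h1, hk1, hp]
  have hEconst : ∀ t : ℕ, 1 ≤ t → t ≤ k → μ (E t) = p * μ s := by
    intro t
    induction t with
    | zero => omega
    | succ t ih =>
      intro _ h2
      by_cases ht : t = 0
      · subst ht
        rw [hEsucc 0, hkc0, hE0]
      · rw [hEsucc t, hkc t (by omega) (by omega), one_mul, ih (by omega) (by omega)]
  have hEsub : ∀ t, E (t+1) ⊆ E t := by
    intro t ω h i
    exact h ⟨i.val, by omega⟩
  have hEsubs : ∀ t, E t ⊆ s := by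
    intro t ω h
    have h' := h ⟨0, by omega⟩
    show X 0 ω = s0
    rw [← hc0]
    exact h'
  have hdiffnull : ∀ t, 1 ≤ t → t < k → μ (E t \ E (t+1)) = 0 := by
    intro t h1 h2
    rw [measure_diff (hEsub t) (hEmeas (t+1)).nullMeasurableSet (measure_ne_top μ _),
      hEconst (t+1) (by omega) (by omega), hEconst t (by omega) (by omega), tsub_self]
  have hbad : ∀ j : Fin k, (j:ℕ) ≠ 0 → (j:ℕ) ≠ 1 → μ {ω | X 1 ω = j ∧ X 0 ω = s0} = 0 := by
    intro j hj0 hj1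
    have hmm := hM 0 (fun _ => s0) j
    have hmk : mkKernel k s0 j = 0 := by simp [mkKernel, hs0, hj0, hj1]
    rw [hmk, zero_mul] at hmm
    have e1 : {ω | X 1 ω = j ∧ X 0 ω = s0}
        = {ω | X (0+1) ω = j ∧ ∀ i : Fin (0+1), X i.val ω = (fun _ : Fin 1 => s0) i} := by
      ext ω
      constructor
      · rintro ⟨a, b⟩
        refine ⟨a, fun i => ?_⟩
        show X i.val ω = s0
        rw [show (i:ℕ) = 0 from by omega]
        exact b
      · rintro ⟨a, b⟩
        exact ⟨a, b 0⟩
    rw [e1, hmm]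
  set N1 : Set Ω := s \ (B ∪ E 1) with hN1
  have hN1null : μ N1 = 0 := by
    have hsub : N1 ⊆ ⋃ j : Fin k,
        (if (j:ℕ) = 0 ∨ (j:ℕ) = 1 then (∅ : Set Ω) else {ω | X 1 ω = j ∧ X 0 ω = s0}) := by
      intro ω hω
      obtain ⟨hωs, hωn⟩ := hω
      rw [Set.mem_union] at hωn
      push_neg at hωn
      obtain ⟨hnB, hnE⟩ := hωn
      refine Set.mem_iUnion.2 ⟨X 1 ω, ?_⟩
      have hj0 : ¬ ((X 1 ω : ℕ) = 0) := by
        intro hcon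
        refine hnB ⟨Fin.ext (by rw [hcon]), fun i => ?_⟩
        show X i.val ω = s0
        rw [show (i:ℕ) = 0 from by omega]
        exact hωs
      have hj1 : ¬ ((X 1 ω : ℕ) = 1) := by
        intro hcon
        refine hnE fun i => ?_
        have hiv : (i:ℕ) = 0 ∨ (i:ℕ) = 1 := by omega
        rcases hiv with h|h
        · rw [h, hc0]; exact hωs
        · rw [h]
          exact Fin.ext (by rw [hcon, hcval 1 (by omega)])
      rw [if_neg (by tauto)]
      exact ⟨rfl, hωs⟩
    refine measure_mono_null hsub (measure_iUnion_null fun j => ?_)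
    by_cases hj : (j:ℕ) = 0 ∨ (j:ℕ) = 1
    · rw [if_pos hj]; exact measure_empty
    · push_neg at hj
      rw [if_neg (by tauto)]
      exact hbad j hj.1 hj.2
  set NN : Set Ω := N1 ∪ ⋃ t : ℕ, (if 1 ≤ t ∧ t < k then E t \ E (t+1) else ∅) with hNN
  have hNNnull : μ NN = 0 := by
    refine measure_union_null hN1null (measure_iUnion_null fun t => ?_)
    by_cases ht : 1 ≤ t ∧ t < k
    · rw [if_pos ht]; exact hdiffnull t ht.1 ht.2
    · rw [if_neg ht]; exact measure_empty
  have hcover : s ⊆ (B ∪ E k) ∪ NN := by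
    intro ω hωs
    by_cases hωN : ω ∈ NN
    · exact Or.inr hωN
    · have hnN1 : ω ∉ N1 := fun h => hωN (Or.inl h)
      have hBE1 : ω ∈ B ∪ E 1 := by
        by_contra hcon
        exact hnN1 ⟨hωs, hcon⟩
      rcases hBE1 with hB'|hE1'
      · exact Or.inl (Or.inl hB')
      · have key : ∀ t, 1 ≤ t → t ≤ k → ω ∈ E t := by
          intro t
          induction t with
          | zero => omega
          | succ t ih =>
            intro _ h2
            by_cases ht : t = 0
            · subst ht; exact hE1'
            · have hEt := ih (by omega) (by omega)
              by_contra hcon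
              exact hωN (Or.inr (Set.mem_iUnion.2
                ⟨t, by rw [if_pos ⟨by omega, by omega⟩]; exact ⟨hEt, hcon⟩⟩))
        exact Or.inl (Or.inr (key k (by omega) le_rfl))
  have hrB : ∀ ω ∈ B, retTime X s0 ω = ((1:ℕ) : ℕ∞) := by
    intro ω hω
    exact retTime_eq_of X s0 ω 1 (by omega) hω.1 (fun j hj1 hj2 => by omega)
  have hrE : ∀ ω ∈ E k, retTime X s0 ω = ((k:ℕ) : ℕ∞) := by
    intro ω hω
    refine retTime_eq_of X s0 ω k (by omega) ?_ ?_
    · have h' := hω ⟨k, by omega⟩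
      show X k ω = s0
      rw [← hck]
      exact h'
    · intro j hj1 hj2 hcon
      have h' := hω ⟨j, by omega⟩
      rw [hcon] at h'
      have hval : (c j : ℕ) = 0 := by rw [← h']
      rw [hcval j (by omega)] at hval
      omega
  have hBEdisj : Disjoint B (E k) := by
    rw [Set.disjoint_left]
    intro ω hωB hωE
    have h1 : X 1 ω = s0 := hωB.1
    have h2 := hωE ⟨1, by omega⟩
    rw [show ((⟨1, by omega⟩ : Fin (k+1)) : ℕ) = 1 from rfl] at h2
    rw [h1] at h2
    have hval : (c 1 : ℕ) = 0 := by rw [← h2]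
    rw [hcval 1 (by omega)] at hval
    omega
  have hμEk : μ (E k) = p * μ s := hEconst k (by omega) le_rfl
  constructor
  · -- the integral
    rw [ProbabilityTheory.cond, lintegral_smul_measure]
    have hae : s =ᵐ[μ] ((B ∪ E k : Set Ω)) := by
      rw [MeasureTheory.ae_eq_set]
      constructor
      · refine measure_mono_null (fun ω hω => ?_) hNNnull
        rcases hcover hω.1 with h|h
        · exact absurd h hω.2
        · exact h
      · have hempty : (B ∪ E k) \ s = ∅ :=
          Set.diff_eq_empty.2 (Set.union_subset hBs (hEsubs k))
        rw [hempty]; exact measure_empty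
    have hres : ∫⁻ ω, ((retTime X s0 ω : ℕ∞) : ℝ≥0∞) ∂(μ.restrict s)
        = ∫⁻ ω in B ∪ E k, ((retTime X s0 ω : ℕ∞) : ℝ≥0∞) ∂μ :=
      setLIntegral_congr hae
    rw [hres, lintegral_union (hEmeas k) hBEdisj]
    have hptwB : ∀ᵐ ω ∂μ, ω ∈ B → ((retTime X s0 ω : ℕ∞) : ℝ≥0∞) = (1 : ℝ≥0∞) :=
      ae_of_all μ (fun ω hω => by rw [hrB ω hω]; simp)
    have hfB : ∫⁻ ω in B, ((retTime X s0 ω : ℕ∞) : ℝ≥0∞) ∂μ = μ B := by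
      rw [setLIntegral_congr_fun_ae hBmeas hptwB, setLIntegral_one]
    have hptwE : ∀ᵐ ω ∂μ, ω ∈ E k → ((retTime X s0 ω : ℕ∞) : ℝ≥0∞) = ((k:ℕ) : ℝ≥0∞) :=
      ae_of_all μ (fun ω hω => by rw [hrE ω hω]; simp)
    have hfE : ∫⁻ ω in E k, ((retTime X s0 ω : ℕ∞) : ℝ≥0∞) ∂μ = (k:ℝ≥0∞) * μ (E k) := by
      rw [setLIntegral_congr_fun_ae (hEmeas k) hptwE, setLIntegral_const]
    rw [hfB, hfE, hμB, hμEk]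
    rw [show (1-p) * μ s + (k:ℝ≥0∞) * (p * μ s) = ((1-p) + (k:ℝ≥0∞) * p) * μ s by ring]
    rw [mul_comm ((1-p) + (k:ℝ≥0∞) * p) (μ s), smul_eq_mul, ← mul_assoc,
      ENNReal.inv_mul_cancel h0 (measure_ne_top μ s), one_mul]
    have hksplit : (k:ℝ≥0∞) = ((k-1:ℕ):ℝ≥0∞) + 1 := by
      exact_mod_cast congrArg (Nat.cast : ℕ → ℝ≥0∞) (by omega : k = k - 1 + 1)
    rw [hksplit, add_mul, one_mul, hpinv, ENNReal.mul_inv_cancel hnne hnnetop]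
    rw [hpinv] at hple
    rw [show (1 - ((k-1:ℕ):ℝ≥0∞)⁻¹) + (1 + ((k-1:ℕ):ℝ≥0∞)⁻¹)
        = ((1 - ((k-1:ℕ):ℝ≥0∞)⁻¹) + ((k-1:ℕ):ℝ≥0∞)⁻¹) + 1 by ring,
      tsub_add_cancel_of_le hple]
    norm_num
  · -- the measure of {retTime = k}
    rw [ProbabilityTheory.cond_apply hsmeas]
    have hle1 : μ (E k) ≤ μ (s ∩ {ω | retTime X s0 ω = (k : ℕ∞)}) :=
      measure_mono (fun ω h => ⟨hEsubs k h, hrE ω h⟩)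
    have hle2 : μ (s ∩ {ω | retTime X s0 ω = (k : ℕ∞)}) ≤ μ (E k) := by
      have hsub2 : s ∩ {ω | retTime X s0 ω = (k : ℕ∞)} ⊆ E k ∪ NN := by
        rintro ω ⟨hωs, hωR⟩
        rcases hcover hωs with (hB'|hE')|hN'
        · exfalso
          have h1 : ((k:ℕ) : ℕ∞) = ((1:ℕ) : ℕ∞) := by
            rw [← hωR]; exact hrB ω hB'
          have : k = 1 := by exact_mod_cast h1
          omega
        · exact Or.inl hE'
        · exact Or.inr hN'
      calc μ (s ∩ {ω | retTime X s0 ω = (k : ℕ∞)}) ≤ μ (E k ∪ NN) := measure_mono hsub2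
        _ ≤ μ (E k) + μ NN := measure_union_le _ _
        _ = μ (E k) := by rw [hNNnull, add_zero]
    rw [le_antisymm hle2 hle1, hμEk, mul_comm p (μ s), ← mul_assoc,
      ENNReal.inv_mul_cancel h0 (measure_ne_top μ s), one_mul]



end Stmt17

/-- there is no exponential concentration of first return times in terms of
the expected recurrence time `ρ_s`; in particular the chains `M_k` have `ρ_{s_1} = 2` yet
`P_{s_1}[H_{s_1}^+ = k] = 1/(k-1)`. -/
theorem stmt17 :
    (¬ ∃ a b : ℝ, 0 < a ∧ 0 < b ∧
      ∀ (S : Type) [Fintype S] [DecidableEq S] [MeasurableSpace S]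
        [MeasurableSingletonClass S]
        (Ω : Type) [MeasurableSpace Ω] (μ : Measure Ω) [IsProbabilityMeasure μ]
        (X : ℕ → Ω → S) (P : S → S → ℝ≥0∞),
        (∀ t, Measurable (X t)) → (∀ x, ∑ y, P x y = 1) →
        (∀ (t : ℕ) (h : Fin (t + 1) → S) (s' : S),
          μ {ω | X (t + 1) ω = s' ∧ ∀ i : Fin (t + 1), X i.val ω = h i}
            = P (h (Fin.last t)) s' * μ {ω | ∀ i : Fin (t + 1), X i.val ω = h i}) →
        ∀ s : S, μ {ω | X 0 ω = s} ≠ 0 →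
        ∀ ρ : ℝ≥0∞,
          ρ = ∫⁻ ω, (retTime X s ω : ℝ≥0∞) ∂(ProbabilityTheory.cond μ {ω | X 0 ω = s}) →
          ρ ≠ ⊤ →
        ∀ t : ℝ, 0 < t →
          (ProbabilityTheory.cond μ {ω | X 0 ω = s})
              {ω | ENNReal.ofReal t ≤ (retTime X s ω : ℝ≥0∞)}
            ≤ ENNReal.ofReal (a * Real.exp (-(t / (b * ρ.toReal)))))
    ∧ (∀ (k : ℕ) (hk : 3 ≤ k)
        (Ω : Type) [MeasurableSpace Ω] (μ : Measure Ω) [IsProbabilityMeasure μ]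
        (X : ℕ → Ω → Fin k),
        (∀ t, Measurable (X t)) →
        (∀ (t : ℕ) (h : Fin (t + 1) → Fin k) (s' : Fin k),
          μ {ω | X (t + 1) ω = s' ∧ ∀ i : Fin (t + 1), X i.val ω = h i}
            = mkKernel k (h (Fin.last t)) s'
              * μ {ω | ∀ i : Fin (t + 1), X i.val ω = h i}) →
        μ {ω | X 0 ω = (⟨0, by omega⟩ : Fin k)} ≠ 0 →
        (∫⁻ ω, (retTime X (⟨0, by omega⟩ : Fin k) ω : ℝ≥0∞)
            ∂(ProbabilityTheory.cond μ {ω | X 0 ω = (⟨0, by omega⟩ : Fin k)}) = 2)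
        ∧ (ProbabilityTheory.cond μ {ω | X 0 ω = (⟨0, by omega⟩ : Fin k)})
              {ω | retTime X (⟨0, by omega⟩ : Fin k) ω = (k : ℕ∞)}
            = 1 / ((k : ℝ≥0∞) - 1)) := by
  constructor
  · rintro ⟨a, b, ha, hb, hbound⟩
    have hy : Filter.Tendsto (fun mn : ℕ => (((mn:ℝ))+3)/(b*2)) atTop atTop :=
      Filter.Tendsto.atTop_div_const (by positivity)
        (Filter.tendsto_atTop_add_const_right _ 3 tendsto_natCast_atTop_atTop)
    have hxe : Filter.Tendsto (fun x : ℝ => x * Real.exp (-x)) atTop (nhds 0) := by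
      have := Real.tendsto_pow_mul_exp_neg_atTop_nhds_zero 1
      simpa using this
    have hcomp : Filter.Tendsto
        (fun mn : ℕ => (2*b*a) * (((((mn:ℝ))+3)/(b*2)) * Real.exp (-((((mn:ℝ))+3)/(b*2)))))
        atTop (nhds 0) := by
      have h' := (hxe.comp hy).const_mul (2*b*a)
      simpa [Function.comp] using h'
    obtain ⟨m, hm⟩ := (hcomp.eventually_lt_const (by norm_num : (0:ℝ) < 1)).exists
    have hyval : (((m:ℝ))+3)/(b*2) * (b*2) = (m:ℝ)+3 := div_mul_cancel₀ _ (by positivity)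
    have hexpos : (0:ℝ) < Real.exp (-((((m:ℝ))+3)/(b*2))) := Real.exp_pos _
    have hlt1 : ((m:ℝ)+2) * (a * Real.exp (-((((m:ℝ))+3)/(b*2)))) < 1 := by
      refine lt_of_le_of_lt ?_ hm
      have h1 : ((m:ℝ)+2) ≤ (b*2) * ((((m:ℝ))+3)/(b*2)) := by nlinarith [hyval]
      calc ((m:ℝ)+2) * (a * Real.exp (-((((m:ℝ))+3)/(b*2))))
          ≤ ((b*2) * ((((m:ℝ))+3)/(b*2))) * (a * Real.exp (-((((m:ℝ))+3)/(b*2)))) := by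
            exact mul_le_mul_of_nonneg_right h1 (by positivity)
        _ = (2*b*a) * (((((m:ℝ))+3)/(b*2)) * Real.exp (-((((m:ℝ))+3)/(b*2)))) := by ring
    have hmeasX := Stmt17.XF_measurable m
    have hmarkov := Stmt17.markovF m
    have hne := Stmt17.X0_ne_zero m
    have h2 := Stmt17.part2 (m+3) (by omega) (Stmt17.GG m) (Stmt17.haarG m) (Stmt17.XF m)
      hmeasX hmarkov hne
    have hbd := hbound (Fin (m+3)) (Stmt17.GG m) (Stmt17.haarG m) (Stmt17.XF m)
      (mkKernel (m+3)) hmeasX (Stmt17.mk_row m) hmarkov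
      (⟨0, by omega⟩ : Fin (m+3)) hne 2 h2.1.symm (by simp)
      (((m:ℝ))+3) (by positivity)
    have hb2 : ((2:ℝ≥0∞)).toReal = 2 := by simp
    rw [hb2] at hbd
    have hsubset : {ω | retTime (Stmt17.XF m) (⟨0, by omega⟩ : Fin (m+3)) ω = (((m+3:ℕ)) : ℕ∞)}
        ⊆ {ω | ENNReal.ofReal ((m:ℝ)+3)
            ≤ ((retTime (Stmt17.XF m) (⟨0, by omega⟩ : Fin (m+3)) ω : ℕ∞) : ℝ≥0∞)} := by
      intro ω hω
      simp only [Set.mem_setOf_eq] at hω ⊢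
      rw [hω, show ((m:ℝ)+3) = (((m+3:ℕ)):ℝ) by push_cast; ring, ENNReal.ofReal_natCast]
      simp
    have hlow : ((m:ℝ≥0∞)+2)⁻¹
        ≤ (ProbabilityTheory.cond (Stmt17.haarG m)
            {ω | Stmt17.XF m 0 ω = (⟨0, by omega⟩ : Fin (m+3))})
            {ω | ENNReal.ofReal ((m:ℝ)+3)
              ≤ ((retTime (Stmt17.XF m) (⟨0, by omega⟩ : Fin (m+3)) ω : ℕ∞) : ℝ≥0∞)} := by
      refine le_trans (le_of_eq ?_) (measure_mono hsubset)
      rw [h2.2, Stmt17.hden m, one_div]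
    have hup := le_trans hlow hbd
    have hofreal : ENNReal.ofReal (a * Real.exp (-((((m:ℝ))+3) / (b * 2)))) < ((m:ℝ≥0∞)+2)⁻¹ := by
      have h1 : a * Real.exp (-((((m:ℝ))+3)/(b*2))) < 1/((m:ℝ)+2) := by
        rw [lt_div_iff₀ (by positivity)]
        nlinarith [hlt1]
      have h3 : ENNReal.ofReal (1/((m:ℝ)+2)) = ((m:ℝ≥0∞)+2)⁻¹ := by
        rw [one_div, ENNReal.ofReal_inv_of_pos (by positivity)]
        congr 1
        rw [show ((m:ℝ)+2) = (((m+2:ℕ)):ℝ) by push_cast; ring, ENNReal.ofReal_natCast]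
        push_cast
        ring
      rw [← h3]
      exact (ENNReal.ofReal_lt_ofReal_iff (by positivity)).2 h1
    exact absurd hup (not_le.2 hofreal)
  · intro k hk Ω _ μ _ X hXm hM h0
    exact Stmt17.part2 k hk Ω μ X hXm hM h0
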